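/- Farkas lemma for the PSD cone: given symmetric matrices A^0, A^1, ..., A^m of order N, exactly one of the following holds: (1) there exists x ∈ R^m with A^0 + x_1 A^1 + ... + x_m A^m positive definite; (2) there exists a nonzero positive semidefinite Y with trace(A^0 Y) ≤ 0 and trace(A^i Y) = 0 for all i = 1,...,m. -/

import Mathlib

open Matrix BigOperators

section FarkasAux

variable {N : ℕ}

private lemma repr_trace (f : Matrix (Fin N) (Fin N) ℝ →L[ℝ] ℝ) (M : Matrix (Fin N) (Fin N) ℝ) :
    f M = (M * (Matrix.of fun p q => f (single q p 1))).trace := by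
  set Y : Matrix (Fin N) (Fin N) ℝ := Matrix.of fun p q => f (single q p 1) with hY
  have h1 : f M = ∑ i, ∑ j, M i j * Y j i := by
    conv_lhs => rw [matrix_eq_sum_single M]
    rw [map_sum]
    refine Finset.sum_congr rfl fun i _ => ?_
    rw [map_sum]
    refine Finset.sum_congr rfl fun j _ => ?_
    have : single i j (M i j) = M i j • single i j 1 := by
      rw [Matrix.smul_single, smul_eq_mul, mul_one]
    rw [this, _root_.map_smul, smul_eq_mul]
    rfl
  have h2 : (M * Y).trace = ∑ i, ∑ j, M i j * Y j i := by
    simp [Matrix.trace, Matrix.diag, Matrix.mul_apply]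
  rw [h1, h2]

private lemma quad_eq_trace (Z : Matrix (Fin N) (Fin N) ℝ) (x : Fin N → ℝ) :
    x ⬝ᵥ Z *ᵥ x = (vecMulVec x x * Z).trace := by
  simp only [Matrix.trace, Matrix.diag, Matrix.mul_apply, vecMulVec_apply, dotProduct, mulVec,
    Finset.mul_sum]
  rw [Finset.sum_comm]
  exact Finset.sum_congr rfl fun i _ => Finset.sum_congr rfl fun j _ => by ring

private lemma trace_transpose_right (A Y : Matrix (Fin N) (Fin N) ℝ) (hA : A.IsSymm) :
    (A * Yᵀ).trace = (A * Y).trace := by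
  rw [← Matrix.trace_transpose (A * Yᵀ), Matrix.transpose_mul, Matrix.transpose_transpose, hA.eq,
    Matrix.trace_mul_comm]

private lemma trace_pos_of_posDef {P Y : Matrix (Fin N) (Fin N) ℝ} (hP : P.PosDef)
    (hY : Y.PosSemidef) (hY0 : Y ≠ 0) : 0 < (P * Y).trace := by
  obtain ⟨B, rfl⟩ : ∃ B : Matrix (Fin N) (Fin N) ℝ, Y = Bᴴ * B := by
    open scoped MatrixOrder Matrix.Norms.L2Operator in
    exact CStarAlgebra.nonneg_iff_eq_star_mul_self.mp hY.nonneg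
  have hB : B ≠ 0 := by rintro rfl; simp at hY0
  have key : (P * (Bᴴ * B)).trace = ∑ i, (B i) ⬝ᵥ P *ᵥ (B i) := by
    rw [← Matrix.mul_assoc, Matrix.trace_mul_comm]
    simp only [Matrix.trace, Matrix.diag, Matrix.mul_apply, conjTranspose_apply, star,
      dotProduct, mulVec, Finset.mul_sum, RCLike.star_def, starRingEnd_apply, star_trivial]
  rw [key]
  obtain ⟨i, hi⟩ : ∃ i, B i ≠ 0 := by
    by_contra h
    push_neg at h
    exact hB (by ext i j; simp [h i])
  refine Finset.sum_pos' (fun j _ => ?_) ⟨i, Finset.mem_univ i, ?_⟩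
  · have := hP.posSemidef.dotProduct_mulVec_nonneg (B j)
    simpa using this
  · have := hP.dotProduct_mulVec_pos hi
    simpa using this

private lemma quad_continuous (M : Matrix (Fin N) (Fin N) ℝ) :
    Continuous fun x : Fin N → ℝ => x ⬝ᵥ M *ᵥ x := by
  simp only [dotProduct, mulVec]
  exact continuous_finset_sum _ fun i _ =>
    (continuous_apply i).mul (continuous_finset_sum _ fun j _ =>
      (continuous_const.mul (continuous_apply j)))

private lemma isOpen_quadPos :
    IsOpen {M : Matrix (Fin N) (Fin N) ℝ | ∀ x : Fin N → ℝ, x ≠ 0 → 0 < x ⬝ᵥ M *ᵥ x} := by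
  rw [isOpen_iff_mem_nhds]
  intro M hM
  rcases Nat.eq_zero_or_pos N with hN | hN
  · refine Filter.univ_mem' fun Q x hx => absurd ?_ hx
    subst hN; ext i; exact absurd i.2 (by omega)
  haveI : Nonempty (Fin N) := ⟨⟨0, hN⟩⟩
  have hKc : IsCompact (Metric.sphere (0 : Fin N → ℝ) 1) := isCompact_sphere 0 1
  have hKne : (Metric.sphere (0 : Fin N → ℝ) 1).Nonempty :=
    NormedSpace.sphere_nonempty.mpr zero_le_one
  obtain ⟨x₀, hx₀, hmin'⟩ := hKc.exists_isMinOn hKne (quad_continuous M).continuousOn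
  have hmin : ∀ y ∈ Metric.sphere (0 : Fin N → ℝ) 1, x₀ ⬝ᵥ M *ᵥ x₀ ≤ y ⬝ᵥ M *ᵥ y :=
    fun y hy => hmin' hy
  have hx₀ne : x₀ ≠ 0 := by
    intro h; rw [Metric.mem_sphere, dist_zero_right, h, norm_zero] at hx₀; norm_num at hx₀
  set ε := x₀ ⬝ᵥ M *ᵥ x₀ with hε
  have hεpos : 0 < ε := hM x₀ hx₀ne
  set δ := ε / (N ^ 2 + 1) with hδ
  have hδpos : 0 < δ := by positivity
  set V := ⋂ p : Fin N × Fin N, {Q : Matrix (Fin N) (Fin N) ℝ | |Q p.1 p.2 - M p.1 p.2| < δ}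
    with hV
  have hVopen : IsOpen V := by
    refine isOpen_iInter_of_finite fun p => ?_
    have hc : Continuous fun Q : Matrix (Fin N) (Fin N) ℝ => Q p.1 p.2 :=
      (continuous_apply p.2).comp (continuous_apply p.1)
    have : {Q : Matrix (Fin N) (Fin N) ℝ | |Q p.1 p.2 - M p.1 p.2| < δ} =
        (fun Q : Matrix (Fin N) (Fin N) ℝ => Q p.1 p.2) ⁻¹' Metric.ball (M p.1 p.2) δ := by
      ext Q; simp [Metric.mem_ball, Real.dist_eq]
    rw [this]
    exact hc.isOpen_preimage _ Metric.isOpen_ball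
  have hMV : M ∈ V := by
    simp only [hV, Set.mem_iInter, Set.mem_setOf_eq]
    intro p; simpa using hδpos
  refine Filter.mem_of_superset (hVopen.mem_nhds hMV) ?_
  intro Q hQ
  simp only [Set.mem_setOf_eq]
  have sphere_pos : ∀ y : Fin N → ℝ, ‖y‖ = 1 → 0 < y ⬝ᵥ Q *ᵥ y := by
    intro y hy
    have hysph : y ∈ Metric.sphere (0 : Fin N → ℝ) 1 := by
      rw [Metric.mem_sphere, dist_zero_right]; exact hy
    have h1 : ε ≤ y ⬝ᵥ M *ᵥ y := hmin y hysph
    have hyb : ∀ i, |y i| ≤ 1 := fun i => by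
      have := norm_le_pi_norm y i; rw [hy] at this; simpa [Real.norm_eq_abs] using this
    have hsplit : y ⬝ᵥ Q *ᵥ y = y ⬝ᵥ M *ᵥ y + y ⬝ᵥ (Q - M) *ᵥ y := by
      rw [Matrix.sub_mulVec, dotProduct_sub]; ring
    have hbound : |y ⬝ᵥ (Q - M) *ᵥ y| ≤ (N : ℝ) ^ 2 * δ := by
      have expand : y ⬝ᵥ (Q - M) *ᵥ y = ∑ i, ∑ j, y i * ((Q - M) i j * y j) := by
        simp only [dotProduct, mulVec, Finset.mul_sum]
      rw [expand]
      calc |∑ i, ∑ j, y i * ((Q - M) i j * y j)|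
          ≤ ∑ i, |∑ j, y i * ((Q - M) i j * y j)| := Finset.abs_sum_le_sum_abs _ _
        _ ≤ ∑ i : Fin N, ∑ j : Fin N, |y i * ((Q - M) i j * y j)| :=
            Finset.sum_le_sum fun i _ => Finset.abs_sum_le_sum_abs _ _
        _ ≤ ∑ i : Fin N, ∑ j : Fin N, δ := by
            refine Finset.sum_le_sum fun i _ => Finset.sum_le_sum fun j _ => ?_
            have hQM : |(Q - M) i j| ≤ δ := by
              have := Set.mem_iInter.mp hQ (i, j)
              simp only [Set.mem_setOf_eq] at this
              simpa [Matrix.sub_apply] using this.le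
            calc |y i * ((Q - M) i j * y j)| = |y i| * |(Q - M) i j| * |y j| := by
                  rw [abs_mul, abs_mul]; ring
              _ ≤ 1 * δ * 1 := by
                  apply mul_le_mul (mul_le_mul (hyb i) hQM (abs_nonneg _) zero_le_one)
                    (hyb j) (abs_nonneg _)
                  positivity
              _ = δ := by ring
        _ = (N : ℝ) ^ 2 * δ := by simp [Finset.sum_const]; ring
    have hlt : (N : ℝ) ^ 2 * δ < ε := by
      have h1 : (0:ℝ) < (N : ℝ) ^ 2 + 1 := by positivity
      rw [hδ, div_eq_inv_mul]
      rw [show (N:ℝ) ^ 2 * (((N:ℝ) ^ 2 + 1)⁻¹ * ε) = ((N:ℝ) ^ 2 / ((N:ℝ) ^ 2 + 1)) * ε by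
        field_simp]
      have h2 : (N:ℝ) ^ 2 / ((N:ℝ) ^ 2 + 1) < 1 := by
        rw [div_lt_one h1]; linarith
      nlinarith
    have := neg_abs_le (y ⬝ᵥ (Q - M) *ᵥ y)
    linarith
  intro x hx
  have hxn : ‖x‖ ≠ 0 := norm_ne_zero_iff.mpr hx
  set y := ‖x‖⁻¹ • x with hy
  have hyn : ‖y‖ = 1 := norm_smul_inv_norm hx
  have hpos := sphere_pos y hyn
  have hxy : x ⬝ᵥ Q *ᵥ x = ‖x‖ ^ 2 * (y ⬝ᵥ Q *ᵥ y) := by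
    rw [hy]
    rw [Matrix.mulVec_smul, dotProduct_smul, smul_dotProduct]
    rw [smul_eq_mul, smul_eq_mul]
    field_simp
  rw [hxy]
  positivity

end FarkasAux

/-- Farkas lemma for the positive semidefinite cone: exactly one of the following holds:
(1) some `A⁰ + x₁A¹ + ⋯ + x_mA^m` is positive definite; (2) there is a nonzero PSD `Y`
with `trace(A⁰Y) ≤ 0` and `trace(AⁱY) = 0` for all `i`. -/
theorem stmt12 (m N : ℕ) (A0 : Matrix (Fin N) (Fin N) ℝ) (hA0 : A0.IsSymm)
    (A : Fin m → Matrix (Fin N) (Fin N) ℝ) (hA : ∀ i, (A i).IsSymm) :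
    Xor'
      (∃ x : Fin m → ℝ, (A0 + ∑ i, x i • A i).PosDef)
      (∃ Y : Matrix (Fin N) (Fin N) ℝ, Y.PosSemidef ∧ Y ≠ 0 ∧
        (A0 * Y).trace ≤ 0 ∧ ∀ i, (A i * Y).trace = 0) := by
  have trace_expand : ∀ (x : Fin m → ℝ) (Y : Matrix (Fin N) (Fin N) ℝ),
      ((A0 + ∑ i, x i • A i) * Y).trace = (A0 * Y).trace + ∑ i, x i * (A i * Y).trace := by
    intro x Y
    rw [Matrix.add_mul, Matrix.trace_add, Finset.sum_mul, Matrix.trace_sum]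
    congr 1
    refine Finset.sum_congr rfl fun i _ => ?_
    rw [Matrix.smul_mul, Matrix.trace_smul, smul_eq_mul]
  have notboth : ¬ ((∃ x : Fin m → ℝ, (A0 + ∑ i, x i • A i).PosDef) ∧
      (∃ Y : Matrix (Fin N) (Fin N) ℝ, Y.PosSemidef ∧ Y ≠ 0 ∧
        (A0 * Y).trace ≤ 0 ∧ ∀ i, (A i * Y).trace = 0)) := by
    rintro ⟨⟨x, hx⟩, ⟨Y, hY, hY0, h0, hi⟩⟩
    have h1 : 0 < ((A0 + ∑ i, x i • A i) * Y).trace := trace_pos_of_posDef hx hY hY0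
    rw [trace_expand x Y] at h1
    have h2 : ∑ i, x i * (A i * Y).trace = 0 := by
      refine Finset.sum_eq_zero fun i _ => ?_
      rw [hi i, mul_zero]
    rw [h2] at h1
    linarith
  by_cases hp : ∃ x : Fin m → ℝ, (A0 + ∑ i, x i • A i).PosDef
  · exact Or.inl ⟨hp, fun hq => notboth ⟨hp, hq⟩⟩
  refine Or.inr ⟨?_, hp⟩
  -- Separation argument
  set s : Set (Matrix (Fin N) (Fin N) ℝ) :=
    {M | ∀ x : Fin N → ℝ, x ≠ 0 → 0 < x ⬝ᵥ M *ᵥ x} with hs_def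
  set t : Set (Matrix (Fin N) (Fin N) ℝ) :=
    Set.range (fun x : Fin m → ℝ => A0 + ∑ i, x i • A i) with ht_def
  have quad_smul_add : ∀ (a b : ℝ) (M Q : Matrix (Fin N) (Fin N) ℝ) (x : Fin N → ℝ),
      x ⬝ᵥ (a • M + b • Q) *ᵥ x = a * (x ⬝ᵥ M *ᵥ x) + b * (x ⬝ᵥ Q *ᵥ x) := by
    intro a b M Q x
    rw [Matrix.add_mulVec, dotProduct_add, Matrix.smul_mulVec, Matrix.smul_mulVec,
      dotProduct_smul, dotProduct_smul, smul_eq_mul, smul_eq_mul]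
  have conv_s : Convex ℝ s := by
    intro M hM Q hQ a b ha hb hab
    intro x hx
    rw [quad_smul_add]
    rcases ha.eq_or_lt with rfl | ha'
    · rw [zero_add] at hab; subst hab
      simpa using hQ x hx
    · have h1 : 0 ≤ b * (x ⬝ᵥ Q *ᵥ x) := mul_nonneg hb (le_of_lt (by
        rcases hb.eq_or_lt with rfl | hb'
        · -- b = 0; still need 0 < x Q x?  avoid: handle separately
          exact hQ x hx
        · exact hQ x hx))
      have h2 : 0 < a * (x ⬝ᵥ M *ᵥ x) := mul_pos ha' (hM x hx)
      linarith
  have conv_t : Convex ℝ t := by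
    rintro p ⟨xp, rfl⟩ q ⟨xq, rfl⟩ a b ha hb hab
    refine ⟨a • xp + b • xq, ?_⟩
    have hA0' : a • A0 + b • A0 = A0 := by rw [← add_smul, hab, one_smul]
    have e1 : ∑ i, ((a • xp + b • xq) i) • A i
        = a • ∑ i, xp i • A i + b • ∑ i, xq i • A i := by
      rw [Finset.smul_sum, Finset.smul_sum, ← Finset.sum_add_distrib]
      refine Finset.sum_congr rfl fun i _ => ?_
      simp only [Pi.add_apply, Pi.smul_apply, smul_eq_mul, add_smul, smul_smul]
    show A0 + ∑ i, ((a • xp + b • xq) i) • A i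
        = a • (A0 + ∑ i, xp i • A i) + b • (A0 + ∑ i, xq i • A i)
    rw [e1]
    have e2 : a • (A0 + ∑ i, xp i • A i) + b • (A0 + ∑ i, xq i • A i)
        = (a • A0 + b • A0) + (a • ∑ i, xp i • A i + b • ∑ i, xq i • A i) := by
      rw [smul_add, smul_add]; abel
    rw [e2, hA0']
  have symm_t : ∀ M ∈ t, M.IsSymm := by
    rintro M ⟨x, rfl⟩
    rw [Matrix.IsSymm, Matrix.transpose_add, Matrix.transpose_sum, hA0.eq]
    congr 1
    refine Finset.sum_congr rfl fun i _ => ?_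
    rw [Matrix.transpose_smul, (hA i).eq]
  have disj : Disjoint s t := by
    rw [Set.disjoint_left]
    rintro M hMs ⟨x, rfl⟩
    refine hp ⟨x, Matrix.PosDef.of_dotProduct_mulVec_pos ?_ ?_⟩
    · rw [Matrix.IsHermitian, Matrix.conjTranspose_eq_transpose_of_trivial]
      exact symm_t _ ⟨x, rfl⟩
    · intro z hz
      simpa using hMs z hz
  obtain ⟨f, u, hfs, hft⟩ := geometric_hahn_banach_open conv_s isOpen_quadPos conv_t disj
  set g : Matrix (Fin N) (Fin N) ℝ →L[ℝ] ℝ := -f with hg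
  set c : ℝ := -u with hc
  have hgs : ∀ P ∈ s, c < g P := by
    intro P hP
    have := hfs P hP
    simp only [hg, hc, ContinuousLinearMap.neg_apply]
    linarith
  have hgt : ∀ b ∈ t, g b ≤ c := by
    intro b hb
    have := hft b hb
    simp only [hg, hc, ContinuousLinearMap.neg_apply]
    linarith
  -- identity is in s
  have hone : (1 : Matrix (Fin N) (Fin N) ℝ) ∈ s := by
    intro x hx
    rw [Matrix.one_mulVec]
    have : 0 < x ⬝ᵥ star x := Matrix.dotProduct_self_star_pos_iff.mpr hx
    simpa using this
  -- scaling of s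
  have hs_smul : ∀ (r : ℝ), 0 < r → ∀ P ∈ s, r • P ∈ s := by
    intro r hr P hP x hx
    rw [Matrix.smul_mulVec, dotProduct_smul, smul_eq_mul]
    exact mul_pos hr (hP x hx)
  -- c ≤ 0
  have hc0 : c ≤ 0 := by
    by_contra h
    push_neg at h
    have key : ∀ ε : ℝ, 0 < ε → c < ε * g 1 := by
      intro ε hε
      have := hgs (ε • 1) (hs_smul ε hε 1 hone)
      rwa [_root_.map_smul, smul_eq_mul] at this
    rcases le_or_gt (g 1) 0 with h1 | h1
    · have := key 1 one_pos
      nlinarith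
    · have h3 := key (c / (2 * g 1)) (by positivity)
      rw [div_mul_eq_mul_div, lt_div_iff₀ (by positivity : (0:ℝ) < 2 * g 1)] at h3
      nlinarith [mul_pos h h1]
  -- g nonneg on s
  have hgs0 : ∀ P ∈ s, 0 ≤ g P := by
    intro P hP
    by_contra h
    push_neg at h
    have hr : 0 < (c - 1) / g P := div_pos_iff.mpr (Or.inr ⟨by linarith, h⟩)
    have := hgs _ (hs_smul _ hr P hP)
    rw [_root_.map_smul, smul_eq_mul, div_mul_cancel₀ _ (ne_of_lt h)] at this
    linarith
  -- g nonneg on quadratically-PSD matrices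
  have hpsd : ∀ W : Matrix (Fin N) (Fin N) ℝ, (∀ x : Fin N → ℝ, 0 ≤ x ⬝ᵥ W *ᵥ x) → 0 ≤ g W := by
    intro W hW
    have key : ∀ ε : ℝ, 0 < ε → 0 ≤ g W + ε * g 1 := by
      intro ε hε
      have hmem : W + ε • 1 ∈ s := by
        intro x hx
        rw [Matrix.add_mulVec, dotProduct_add, Matrix.smul_mulVec, dotProduct_smul,
          smul_eq_mul, Matrix.one_mulVec]
        have h2 : 0 < x ⬝ᵥ star x := Matrix.dotProduct_self_star_pos_iff.mpr hx
        have h2' : 0 < x ⬝ᵥ x := by simpa using h2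
        have := hW x
        nlinarith
      have := hgs0 _ hmem
      rwa [map_add, _root_.map_smul, smul_eq_mul] at this
    by_contra h
    push_neg at h
    rcases le_or_gt (g 1) 0 with h1 | h1
    · have := key 1 one_pos
      nlinarith
    · have := key (-(g W) / (2 * g 1)) (div_pos (by linarith) (by linarith))
      rw [div_mul_eq_mul_div] at this
      have h2 : g 1 ≠ 0 := ne_of_gt h1
      have h4 : -g W * g 1 / (2 * g 1) = -g W / 2 := by
        field_simp
      rw [h4] at this
      linarith
  -- values on t
  have hgA0 : g A0 ≤ c := by
    have : A0 ∈ t := ⟨0, by simp⟩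
    exact hgt _ this
  have hgAi : ∀ i, g (A i) = 0 := by
    intro i
    have key : ∀ r : ℝ, g A0 + r * g (A i) ≤ c := by
      intro r
      have hmem : A0 + r • A i ∈ t := by
        refine ⟨Pi.single i r, ?_⟩
        show A0 + ∑ j, (Pi.single i r : Fin m → ℝ) j • A j = A0 + r • A i
        congr 1
        rw [Finset.sum_eq_single i]
        · rw [Pi.single_eq_same]
        · intro j _ hj
          rw [Pi.single_eq_of_ne hj, zero_smul]
        · intro h
          exact absurd (Finset.mem_univ i) h
      have := hgt _ hmem
      rwa [map_add, _root_.map_smul, smul_eq_mul] at this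
    by_contra h
    have hr := key ((c - g A0 + 1) / g (A i))
    rw [div_mul_cancel₀ _ h] at hr
    linarith
  -- construct the matrix Z
  set Yg : Matrix (Fin N) (Fin N) ℝ := Matrix.of fun p q => g (single q p 1) with hYg
  have hrepr : ∀ M : Matrix (Fin N) (Fin N) ℝ, g M = (M * Yg).trace := fun M => repr_trace g M
  set Z : Matrix (Fin N) (Fin N) ℝ := (1/2 : ℝ) • (Yg + Ygᵀ) with hZ
  have hZsymm : Z.IsSymm := by
    rw [Matrix.IsSymm, hZ, Matrix.transpose_smul, Matrix.transpose_add,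
      Matrix.transpose_transpose, add_comm]
  have key : ∀ M : Matrix (Fin N) (Fin N) ℝ, M.IsSymm → (M * Z).trace = g M := by
    intro M hM
    rw [hZ, Matrix.mul_smul, Matrix.trace_smul, Matrix.mul_add, Matrix.trace_add,
      trace_transpose_right M Yg hM, ← hrepr M, smul_eq_mul]
    ring
  -- Z is PSD
  have hvmv_symm : ∀ x : Fin N → ℝ, (vecMulVec x x).IsSymm := by
    intro x
    rw [Matrix.IsSymm]
    ext i j
    simp [vecMulVec_apply, Matrix.transpose_apply, mul_comm]
  have hvmv_psd : ∀ x y : Fin N → ℝ, 0 ≤ y ⬝ᵥ (vecMulVec x x) *ᵥ y := by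
    intro x y
    have : y ⬝ᵥ (vecMulVec x x) *ᵥ y = (x ⬝ᵥ y) * (x ⬝ᵥ y) := by
      rw [show (x ⬝ᵥ y) * (x ⬝ᵥ y) = ∑ i, ∑ j, (x i * y i) * (x j * y j) from
        Finset.sum_mul_sum _ _ _ _]
      simp only [dotProduct, mulVec, vecMulVec_apply, Finset.mul_sum]
      exact Finset.sum_congr rfl fun i _ => Finset.sum_congr rfl fun j _ => by ring
    rw [this]
    exact mul_self_nonneg _
  have hZpsd : Z.PosSemidef := by
    refine Matrix.PosSemidef.of_dotProduct_mulVec_nonneg ?_ ?_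
    · rw [Matrix.IsHermitian, Matrix.conjTranspose_eq_transpose_of_trivial]
      exact hZsymm
    · intro x
      have h1 : (star x) ⬝ᵥ Z *ᵥ x = x ⬝ᵥ Z *ᵥ x := by simp
      rw [h1, quad_eq_trace, key _ (hvmv_symm x)]
      exact hpsd _ (hvmv_psd x)
  have htrA0 : (A0 * Z).trace ≤ 0 := by
    rw [key A0 hA0]
    linarith
  have htrAi : ∀ i, (A i * Z).trace = 0 := by
    intro i
    rw [key _ (hA i)]
    exact hgAi i
  have hZne : Z ≠ 0 := by
    intro h
    have h1 : g A0 = 0 := by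
      rw [← key A0 hA0, h, Matrix.mul_zero, Matrix.trace_zero]
    have h2 : g 1 = 0 := by
      rw [← key 1 (by rw [Matrix.IsSymm, Matrix.transpose_one]), h, Matrix.mul_zero,
        Matrix.trace_zero]
    have h3 := hgs 1 hone
    rw [h2] at h3
    rw [h1] at hgA0
    linarith
  exact ⟨Z, hZpsd, hZne, htrA0, htrAi⟩
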